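/- arXiv:2502.02869 — 3 statements merged into one kernel-verified Lean document; each statement's English description precedes it below -/
import Mathlib

section
/- Let P be an irreducible row-stochastic matrix on a finite state space. Then P has a unique stationary distribution, and this distribution is strictly positive at every state. -/
open Matrix Finset Filter Topology

set_option linter.unusedSectionVars false

section helpers
variable {S : Type*} [Fintype S] [DecidableEq S] [Nonempty S]

lemma stmt4_pow_nonneg (P : Matrix S S ℝ) (hPnn : ∀ i j, 0 ≤ P i j) :
    ∀ k i j, 0 ≤ (P ^ k) i j := by
  intro k
  induction k with
  | zero =>
    intro i j
    simp only [pow_zero, Matrix.one_apply]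
    split <;> norm_num
  | succ k ih =>
    intro i j
    rw [pow_succ, Matrix.mul_apply]
    exact Finset.sum_nonneg fun l _ => mul_nonneg (ih i l) (hPnn l j)

lemma stmt4_sum_vecMul (P : Matrix S S ℝ) {ι : Type*} (t : Finset ι) (f : ι → S → ℝ) :
    (∑ k ∈ t, f k) ᵥ* P = ∑ k ∈ t, f k ᵥ* P := by
  ext j
  show ∑ i, (∑ k ∈ t, f k) i * P i j = _
  simp only [Finset.sum_apply, Finset.sum_mul]
  rw [Finset.sum_comm]
  rfl

-- simplex preserved by vecMul
lemma stmt4_step (P : Matrix S S ℝ) (hPnn : ∀ i j, 0 ≤ P i j)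
    (hProw : ∀ i, ∑ j, P i j = 1) (v : S → ℝ)
    (hv : (∀ s, 0 ≤ v s) ∧ ∑ s, v s = 1) :
    (∀ s, 0 ≤ (v ᵥ* P) s) ∧ ∑ s, (v ᵥ* P) s = 1 := by
  constructor
  · intro s
    exact Finset.sum_nonneg fun i _ => mul_nonneg (hv.1 i) (hPnn i s)
  · show ∑ j, ∑ i, v i * P i j = 1
    rw [Finset.sum_comm]
    have : ∀ i, ∑ j, v i * P i j = v i := by
      intro i; rw [← Finset.mul_sum, hProw, mul_one]
    simp_rw [this, hv.2]

-- norm bound on simplex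
lemma stmt4_norm_le (v : S → ℝ) (hv : (∀ s, 0 ≤ v s) ∧ ∑ s, v s = 1) :
    ‖v‖ ≤ 1 := by
  rw [pi_norm_le_iff_of_nonneg zero_le_one]
  intro s
  rw [Real.norm_eq_abs, abs_of_nonneg (hv.1 s)]
  calc v s ≤ ∑ t, v t := Finset.single_le_sum (fun t _ => hv.1 t) (Finset.mem_univ s)
    _ = 1 := hv.2

lemma stmt4_exists (P : Matrix S S ℝ) (hPnn : ∀ i j, 0 ≤ P i j)
    (hProw : ∀ i, ∑ j, P i j = 1) :
    ∃ p : S → ℝ, (∀ s, 0 ≤ p s) ∧ ∑ s, p s = 1 ∧ p ᵥ* P = p := by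
  set K : Set (S → ℝ) := {v | (∀ s, 0 ≤ v s) ∧ ∑ s, v s = 1} with hK
  have hKstep : ∀ v ∈ K, v ᵥ* P ^ 1 ∈ K := by
    intro v hv; rw [pow_one]; exact stmt4_step P hPnn hProw v hv
  -- K compact
  have hKclosed : IsClosed K := by
    have h1 : IsClosed {v : S → ℝ | ∀ s, 0 ≤ v s} := by
      have : {v : S → ℝ | ∀ s, 0 ≤ v s} = ⋂ s, {v | 0 ≤ v s} := by
        ext v; simp [Set.mem_iInter]
      rw [this]
      exact isClosed_iInter fun s => isClosed_le continuous_const (continuous_apply s)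
    have h2 : IsClosed {v : S → ℝ | ∑ s, v s = 1} :=
      isClosed_eq (by continuity) continuous_const
    exact h1.inter h2
  have hKbdd : Bornology.IsBounded K := by
    apply Bornology.IsBounded.subset (Metric.isBounded_closedBall (x := (0 : S → ℝ)) (r := 1))
    intro v hv
    simp only [Metric.mem_closedBall, dist_zero_right]
    exact stmt4_norm_le v hv
  have hKcomp : IsCompact K := Metric.isCompact_of_isClosed_isBounded hKclosed hKbdd
  -- Cesàro sequence
  set μ : S → ℝ := fun _ => (Fintype.card S : ℝ)⁻¹ with hμ
  have hcard : (0:ℝ) < Fintype.card S := by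
    exact_mod_cast Fintype.card_pos
  have hμK : μ ∈ K := by
    constructor
    · intro s; positivity
    · simp only [hμ, Finset.sum_const, Finset.card_univ, nsmul_eq_mul]
      field_simp
  have hμkK : ∀ k, μ ᵥ* P ^ k ∈ K := by
    intro k
    induction k with
    | zero => simpa using hμK
    | succ k ih =>
      rw [pow_succ, ← Matrix.vecMul_vecMul]
      exact stmt4_step P hPnn hProw _ ih
  set b : ℕ → (S → ℝ) := fun n => ((n:ℝ)+1)⁻¹ • ∑ k ∈ Finset.range (n+1), μ ᵥ* P ^ k with hb
  have hbK : ∀ n, b n ∈ K := by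
    intro n
    have hn : (0:ℝ) < (n:ℝ)+1 := by positivity
    constructor
    · intro s
      simp only [hb, Pi.smul_apply, smul_eq_mul, Finset.sum_apply]
      exact mul_nonneg (by positivity)
        (Finset.sum_nonneg fun k _ => (hμkK k).1 s)
    · simp only [hb, Pi.smul_apply, smul_eq_mul, Finset.sum_apply]
      rw [← Finset.mul_sum, Finset.sum_comm]
      have : ∀ k ∈ Finset.range (n+1), ∑ s, (μ ᵥ* P ^ k) s = 1 := fun k _ => (hμkK k).2
      rw [Finset.sum_congr rfl this]
      simp
      field_simp
  obtain ⟨p, hpK, φ, hφ, hconv⟩ := hKcomp.tendsto_subseq hbK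
  -- the map T
  have hTcont : Continuous (fun v : S → ℝ => v ᵥ* P) := by
    apply continuous_pi
    intro j
    show Continuous fun v : S → ℝ => ∑ i, v i * P i j
    exact continuous_finset_sum _ fun i _ => (continuous_apply i).mul continuous_const
  -- error formula
  have herr : ∀ n, b n ᵥ* P - b n = ((n:ℝ)+1)⁻¹ • (μ ᵥ* P ^ (n+1) - μ) := by
    intro n
    have h1 : b n ᵥ* P = ((n:ℝ)+1)⁻¹ • ∑ k ∈ Finset.range (n+1), μ ᵥ* P ^ (k+1) := by
      rw [hb]
      rw [Matrix.smul_vecMul, stmt4_sum_vecMul]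
      congr 1
      refine Finset.sum_congr rfl fun k _ => ?_
      rw [Matrix.vecMul_vecMul, ← pow_succ]
    rw [h1, hb, ← smul_sub, ← Finset.sum_sub_distrib]
    congr 1
    have := Finset.sum_range_sub (f := fun k => μ ᵥ* P ^ k) (n+1)
    simpa using this
  -- error tends to zero
  have herr0 : Tendsto (fun n => b (φ n) ᵥ* P - b (φ n)) atTop (𝓝 0) := by
    refine squeeze_zero_norm (f := fun n => b (φ n) ᵥ* P - b (φ n)) (a := fun n => 2 * ((n:ℝ)+1)⁻¹) ?_ ?_
    · intro n
      show ‖b (φ n) ᵥ* P - b (φ n)‖ ≤ 2 * ((n:ℝ)+1)⁻¹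
      rw [herr]
      have hφn : (n:ℝ) + 1 ≤ (φ n : ℝ) + 1 := by
        have h := hφ.le_apply (x := n)
        have : (n:ℝ) ≤ (φ n : ℝ) := by exact_mod_cast h
        linarith
      have h2 : ‖μ ᵥ* P ^ (φ n + 1) - μ‖ ≤ 2 := by
        calc ‖μ ᵥ* P ^ (φ n + 1) - μ‖ ≤ ‖μ ᵥ* P ^ (φ n + 1)‖ + ‖μ‖ := norm_sub_le _ _
          _ ≤ 1 + 1 := add_le_add (stmt4_norm_le _ ⟨(hμkK _).1, (hμkK _).2⟩)
              (stmt4_norm_le _ ⟨hμK.1, hμK.2⟩)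
          _ = 2 := by norm_num
      rw [norm_smul]
      have hp1 : (0:ℝ) < (φ n : ℝ) + 1 := by positivity
      have hp2 : (0:ℝ) < (n:ℝ) + 1 := by positivity
      calc ‖(((φ n : ℝ)+1)⁻¹ : ℝ)‖ * ‖μ ᵥ* P ^ (φ n + 1) - μ‖
          ≤ ((φ n : ℝ)+1)⁻¹ * 2 := by
            rw [Real.norm_eq_abs, abs_of_pos (by positivity)]
            exact mul_le_mul_of_nonneg_left h2 (by positivity)
        _ ≤ ((n:ℝ)+1)⁻¹ * 2 := by
            apply mul_le_mul_of_nonneg_right _ (by norm_num)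
            exact inv_anti₀ hp2 hφn
        _ = 2 * ((n:ℝ)+1)⁻¹ := by ring
    · have : Tendsto (fun n : ℕ => ((n:ℝ)+1)⁻¹) atTop (𝓝 0) := by
        apply tendsto_inv_atTop_zero.comp
        exact tendsto_atTop_add_const_right _ _ tendsto_natCast_atTop_atTop
      simpa using this.const_mul 2
  -- conclude
  have h1 : Tendsto (fun n => b (φ n) ᵥ* P - b (φ n)) atTop (𝓝 (p ᵥ* P - p)) :=
    ((hTcont.tendsto p).comp hconv).sub hconv
  have h2 : p ᵥ* P - p = 0 := tendsto_nhds_unique h1 herr0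
  exact ⟨p, hpK.1, hpK.2, by rwa [sub_eq_zero] at h2⟩
lemma stmt4_key_pos (P : Matrix S S ℝ) (hPnn : ∀ i j, 0 ≤ P i j)
    (hirr : ∀ i j, ∃ k : ℕ, 1 ≤ k ∧ 0 < (P ^ k) i j)
    (r : S → ℝ) (hr0 : ∀ s, 0 ≤ r s) (hst : r ᵥ* P = r)
    (t : S) (ht : 0 < r t) : ∀ s, 0 < r s := by
  have hstk : ∀ k, r ᵥ* P ^ k = r := by
    intro k
    induction k with
    | zero => simp
    | succ k ih => rw [pow_succ, ← Matrix.vecMul_vecMul, ih, hst]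
  intro s
  obtain ⟨k, -, hkpos⟩ := hirr t s
  have h1 : ∑ i, r i * (P ^ k) i s = r s := congrFun (hstk k) s
  have h2 : r t * (P ^ k) t s ≤ ∑ i, r i * (P ^ k) i s :=
    Finset.single_le_sum (f := fun i => r i * (P ^ k) i s)
      (fun i _ => mul_nonneg (hr0 i) (stmt4_pow_nonneg P hPnn k i s))
      (Finset.mem_univ t)
  have := mul_pos ht hkpos
  linarith

end helpers

/-- An irreducible row-stochastic matrix on a finite state space has a unique
stationary distribution, which is strictly positive at every state. -/
theorem stmt4 {S : Type*} [Fintype S] [DecidableEq S] [Nonempty S]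
    (P : Matrix S S ℝ)
    (hPnn : ∀ i j, 0 ≤ P i j)
    (hProw : ∀ i, ∑ j, P i j = 1)
    (hirr : ∀ i j, ∃ k : ℕ, 1 ≤ k ∧ 0 < (P ^ k) i j) :
    (∃! p : S → ℝ,
      (∀ s, 0 ≤ p s) ∧ (∑ s, p s = 1) ∧ (∀ j, ∑ i, p i * P i j = p j)) ∧
    (∀ p : S → ℝ,
      ((∀ s, 0 ≤ p s) ∧ (∑ s, p s = 1) ∧ (∀ j, ∑ i, p i * P i j = p j)) →
      ∀ s, 0 < p s) := by
  have hstat : ∀ p : S → ℝ, (∀ j, ∑ i, p i * P i j = p j) ↔ p ᵥ* P = p := by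
    intro p
    constructor
    · intro h; ext j; exact h j
    · intro h j; exact congrFun h j
  have hpos : ∀ p : S → ℝ,
      ((∀ s, 0 ≤ p s) ∧ (∑ s, p s = 1) ∧ (∀ j, ∑ i, p i * P i j = p j)) →
      ∀ s, 0 < p s := by
    rintro p ⟨h0, h1, h2⟩ s
    have hex : ∃ t, 0 < p t := by
      by_contra h
      push_neg at h
      have hz : ∀ t, p t = 0 := fun t => le_antisymm (h t) (h0 t)
      simp [hz] at h1
    obtain ⟨t, ht⟩ := hex
    exact stmt4_key_pos P hPnn hirr p h0 ((hstat p).1 h2) t ht s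
  refine ⟨?_, hpos⟩
  obtain ⟨p, hp0, hp1, hp2⟩ := stmt4_exists P hPnn hProw
  refine ⟨p, ⟨hp0, hp1, (hstat p).2 hp2⟩, ?_⟩
  rintro q ⟨hq0, hq1, hq2'⟩
  have hq2 : q ᵥ* P = q := (hstat q).1 hq2'
  have hppos : ∀ s, 0 < p s := hpos p ⟨hp0, hp1, (hstat p).2 hp2⟩
  obtain ⟨s0, -, hs0⟩ := Finset.exists_min_image Finset.univ (fun s => q s / p s)
    ⟨Classical.arbitrary S, Finset.mem_univ _⟩
  set c := q s0 / p s0 with hc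
  have hcle : ∀ s, c * p s ≤ q s := by
    intro s
    have h := hs0 s (Finset.mem_univ s)
    have := (div_le_div_iff₀ (hppos s0) (hppos s)).1 h
    have hps : 0 < p s := hppos s
    rw [hc, div_mul_eq_mul_div, div_le_iff₀ (hppos s0)]
    nlinarith
  set r : S → ℝ := q - c • p with hr
  have hr0 : ∀ s, 0 ≤ r s := by
    intro s
    simp only [hr, Pi.sub_apply, Pi.smul_apply, smul_eq_mul]
    linarith [hcle s]
  have hrst : r ᵥ* P = r := by
    rw [hr, Matrix.sub_vecMul, Matrix.smul_vecMul, hq2, hp2]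
  have hrs0 : r s0 = 0 := by
    simp only [hr, Pi.sub_apply, Pi.smul_apply, smul_eq_mul, hc]
    rw [div_mul_cancel₀ _ (ne_of_gt (hppos s0))]
    ring
  have hrzero : ∀ s, r s = 0 := by
    intro s
    by_contra h
    have hpos' : 0 < r s := lt_of_le_of_ne (hr0 s) (Ne.symm h)
    have := stmt4_key_pos P hPnn hirr r hr0 hrst s hpos' s0
    rw [hrs0] at this
    exact lt_irrefl 0 this
  have hqc : ∀ s, q s = c * p s := by
    intro s
    have := hrzero s
    simp only [hr, Pi.sub_apply, Pi.smul_apply, smul_eq_mul] at this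
    linarith
  have hc1 : c = 1 := by
    have : (1:ℝ) = c * 1 := by
      calc (1:ℝ) = ∑ s, q s := hq1.symm
        _ = ∑ s, c * p s := Finset.sum_congr rfl fun s _ => hqc s
        _ = c * ∑ s, p s := (Finset.mul_sum _ _ _).symm
        _ = c * 1 := by rw [hp1]
    linarith
  ext s
  rw [hqc s, hc1, one_mul]
end

section
/- Under the banded structure of the previous statement with the additional assumption that P(j|i) ≤ 1-η for all j > i (upward mass at most 1-η at every state), the k-step probability of moving upward by m states satisfies (P^k)(i+m | i) ≤ C(k, ⌈m/b⁺⌉) · (1-η)^{⌈m/b⁺⌉}, where C(k,r) is the binomial coefficient counting the choice of which steps move upward. -/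
/-- Under the banded structure with total upward mass at most `1-η` at every state,
the `k`-step probability of moving up by `m` states is bounded by
`C(k, ⌈m/b⁺⌉)·(1-η)^{⌈m/b⁺⌉}`. -/
theorem stmt10 (n bm bp : ℕ) (hbm : 1 ≤ bm) (hbp : 1 ≤ bp)
    (η : ℝ) (hη0 : 0 < η) (hη1 : η < 1)
    (P : Matrix (Fin n) (Fin n) ℝ)
    (hPnn : ∀ i j, 0 ≤ P i j)
    (hProw : ∀ i, ∑ j, P i j = 1)
    (hband : ∀ i j : Fin n, (j.val + bm < i.val ∨ i.val + bp < j.val) → P i j = 0)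
    (hup : ∀ i : Fin n,
      ∑ j ∈ Finset.univ.filter (fun j : Fin n => i.val < j.val), P i j ≤ 1 - η)
    (m k : ℕ) (hm : 1 ≤ m) (hk : (m + bp - 1) / bp ≤ k)
    (i j : Fin n) (hij : j.val = i.val + m) :
    (P ^ k) i j ≤ (k.choose ((m + bp - 1) / bp) : ℝ) * (1 - η) ^ ((m + bp - 1) / bp) := by
  have hbp0 : 0 < bp := hbp
  have h1η : (0:ℝ) ≤ 1 - η := by linarith
  -- entries of P^k are nonnegative
  have hnn : ∀ K (a b : Fin n), 0 ≤ (P ^ K) a b := by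
    intro K
    induction K with
    | zero =>
      intro a b
      rw [pow_zero, Matrix.one_apply]
      split <;> norm_num
    | succ K ih =>
      intro a b
      rw [pow_succ, Matrix.mul_apply]
      exact Finset.sum_nonneg fun l _ => mul_nonneg (ih a l) (hPnn l b)
  -- rows of P^k sum to 1
  have hrow : ∀ K (a : Fin n), ∑ b, (P ^ K) a b = 1 := by
    intro K
    induction K with
    | zero =>
      intro a
      simp [Matrix.one_apply]
    | succ K ih =>
      intro a
      rw [pow_succ]
      simp only [Matrix.mul_apply]
      rw [Finset.sum_comm]
      have : ∀ l : Fin n, ∑ b, (P ^ K) a l * P l b = (P ^ K) a l := by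
        intro l
        rw [← Finset.mul_sum, hProw, mul_one]
      rw [Finset.sum_congr rfl (fun l _ => this l)]
      exact ih a
  -- entries of P^k are at most 1
  have hle1 : ∀ K (a b : Fin n), (P ^ K) a b ≤ 1 := by
    intro K a b
    calc (P ^ K) a b ≤ ∑ b', (P ^ K) a b' :=
          Finset.single_le_sum (fun l _ => hnn K a l) (Finset.mem_univ b)
      _ = 1 := hrow K a
  -- the key induction
  have key : ∀ K (a b : Fin n) (r : ℕ), r ≤ (b.val - a.val + bp - 1) / bp →
      (P ^ K) a b ≤ (K.choose r : ℝ) * (1 - η) ^ r := by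
    intro K
    induction K with
    | zero =>
      intro a b r hr
      rcases Nat.eq_zero_or_pos r with h0 | h1
      · subst h0
        simpa using hle1 0 a b
      · have hab : a.val < b.val := by
          by_contra h
          push_neg at h
          have hz : b.val - a.val = 0 := by omega
          rw [hz] at hr
          have : (0 + bp - 1) / bp = 0 := Nat.div_eq_of_lt (by omega)
          omega
        have hne : a ≠ b := by
          intro h
          rw [h] at hab
          exact lt_irrefl _ hab
        rw [pow_zero, Matrix.one_apply_ne hne]
        have hc : Nat.choose 0 r = 0 := Nat.choose_eq_zero_of_lt h1
        rw [hc]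
        simp
    | succ K ih =>
      intro a b r hr
      rcases Nat.eq_zero_or_pos r with h0 | h1
      · subst h0
        simpa using hle1 (K+1) a b
      obtain ⟨s, rfl⟩ : ∃ s, r = s + 1 := ⟨r - 1, by omega⟩
      have hmul1 : (s + 1) * bp ≤ b.val - a.val + bp - 1 :=
        (Nat.le_div_iff_mul_le hbp0).mp hr
      have hs1 : s * bp + bp ≤ b.val - a.val + bp - 1 := by
        rw [add_mul, one_mul] at hmul1
        exact hmul1
      have hcnn1 : (0:ℝ) ≤ (K.choose (s+1) : ℝ) * (1 - η) ^ (s+1) := by positivity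
      have hcnn2 : (0:ℝ) ≤ (K.choose s : ℝ) * (1 - η) ^ s := by positivity
      -- bound for low intermediate states
      have bound1 : ∀ l : Fin n, l.val ≤ a.val →
          (P ^ K) l b ≤ (K.choose (s+1) : ℝ) * (1 - η) ^ (s+1) := by
        intro l hl
        apply ih l b (s+1)
        exact le_trans hr (Nat.div_le_div_right (by omega))
      -- bound for high intermediate states
      have bound2 : ∀ l : Fin n, a.val < l.val →
          P a l * (P ^ K) l b ≤ P a l * ((K.choose s : ℝ) * (1 - η) ^ s) := by
        intro l hl
        by_cases hb' : a.val + bp < l.val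
        · rw [hband a l (Or.inr hb')]
          simp
        · push_neg at hb'
          apply mul_le_mul_of_nonneg_left _ (hPnn a l)
          apply ih l b s
          apply (Nat.le_div_iff_mul_le hbp0).mpr
          have hgen : ∀ t : ℕ, t + bp ≤ b.val - a.val + bp - 1 → t ≤ b.val - l.val + bp - 1 := by
            intro t ht
            omega
          exact hgen _ hs1
      rw [pow_succ', Matrix.mul_apply]
      calc ∑ l, P a l * (P ^ K) l b
          = (∑ l ∈ Finset.univ.filter (fun l : Fin n => a.val < l.val), P a l * (P ^ K) l b)
            + ∑ l ∈ Finset.univ.filter (fun l : Fin n => ¬ a.val < l.val), P a l * (P ^ K) l b :=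
            (Finset.sum_filter_add_sum_filter_not _ _ _).symm
        _ ≤ (1 - η) * ((K.choose s : ℝ) * (1 - η) ^ s)
            + (K.choose (s+1) : ℝ) * (1 - η) ^ (s+1) := by
            apply add_le_add
            · calc ∑ l ∈ Finset.univ.filter (fun l : Fin n => a.val < l.val), P a l * (P ^ K) l b
                  ≤ ∑ l ∈ Finset.univ.filter (fun l : Fin n => a.val < l.val),
                      P a l * ((K.choose s : ℝ) * (1 - η) ^ s) := by
                    apply Finset.sum_le_sum
                    intro l hl
                    exact bound2 l (Finset.mem_filter.mp hl).2
                _ = (∑ l ∈ Finset.univ.filter (fun l : Fin n => a.val < l.val), P a l)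
                      * ((K.choose s : ℝ) * (1 - η) ^ s) := (Finset.sum_mul _ _ _).symm
                _ ≤ (1 - η) * ((K.choose s : ℝ) * (1 - η) ^ s) :=
                    mul_le_mul_of_nonneg_right (hup a) hcnn2
            · calc ∑ l ∈ Finset.univ.filter (fun l : Fin n => ¬ a.val < l.val), P a l * (P ^ K) l b
                  ≤ ∑ l ∈ Finset.univ.filter (fun l : Fin n => ¬ a.val < l.val),
                      P a l * ((K.choose (s+1) : ℝ) * (1 - η) ^ (s+1)) := by
                    apply Finset.sum_le_sum
                    intro l hl
                    have hl' : l.val ≤ a.val := by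
                      have := (Finset.mem_filter.mp hl).2
                      omega
                    exact mul_le_mul_of_nonneg_left (bound1 l hl') (hPnn a l)
                _ = (∑ l ∈ Finset.univ.filter (fun l : Fin n => ¬ a.val < l.val), P a l)
                      * ((K.choose (s+1) : ℝ) * (1 - η) ^ (s+1)) := (Finset.sum_mul _ _ _).symm
                _ ≤ 1 * ((K.choose (s+1) : ℝ) * (1 - η) ^ (s+1)) := by
                    apply mul_le_mul_of_nonneg_right _ hcnn1
                    rw [← hProw a]
                    exact Finset.sum_le_sum_of_subset_of_nonneg (Finset.filter_subset _ _)
                      (fun l _ _ => hPnn a l)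
                _ = (K.choose (s+1) : ℝ) * (1 - η) ^ (s+1) := one_mul _
        _ = ((K+1).choose (s+1) : ℝ) * (1 - η) ^ (s+1) := by
            rw [Nat.choose_succ_succ]
            push_cast
            ring
  have hd : j.val - i.val = m := by omega
  apply key k i j ((m + bp - 1) / bp)
  rw [hd]
end

section
/- If two reward functions R and R' on a finite MDP satisfy R'(s,a,s') = R(s,a,s') + v(s) - γ·v(s') for some v : S → ℝ (potential-based shaping), then the optimal Q-functions satisfy Q'*(s,a) = Q*(s,a) + v(s) for all (s,a); consequently argmax_a Q'*(s,a) = argmax_a Q*(s,a) for every state s, so the shaped MDP has the same optimal policies. -/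
/-- Potential-based reward shaping `R'(s,a,s') = R(s,a,s') + v(s) - γ·v(s')` shifts the
optimal Q-function by `v(s)` and hence preserves the optimal actions in every state. -/
theorem stmt13 {S A : Type*} [Fintype S] [Fintype A] [Nonempty S] [Nonempty A]
    (P : S → A → S → ℝ)
    (hPnn : ∀ s a s', 0 ≤ P s a s')
    (hProw : ∀ s a, ∑ s', P s a s' = 1)
    (R : S → A → S → ℝ) (v : S → ℝ) (γ : ℝ) (hγ0 : 0 ≤ γ) (hγ1 : γ < 1)
    (Q Q' : S → A → ℝ)
    (hQ : ∀ s a, Q s a = ∑ s', P s a s' * (R s a s' + γ * ⨆ a' : A, Q s' a'))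
    (hQ' : ∀ s a, Q' s a =
      ∑ s', P s a s' * ((R s a s' + v s - γ * v s') + γ * ⨆ a' : A, Q' s' a')) :
    (∀ s a, Q' s a = Q s a + v s) ∧
    (∀ s : S, ∀ a : A, (∀ a', Q' s a' ≤ Q' s a) ↔ (∀ a', Q s a' ≤ Q s a)) := by
  have hne : (Finset.univ : Finset (S × A)).Nonempty := Finset.univ_nonempty
  set D : S → A → ℝ := fun s a => Q' s a - (Q s a + v s) with hDdef
  set f : S × A → ℝ := fun p => |D p.1 p.2| with hfdef
  set M : ℝ := Finset.univ.sup' hne f with hMdef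
  have hle : ∀ s a, |D s a| ≤ M := fun s a =>
    Finset.le_sup' f (Finset.mem_univ (s, a))
  obtain ⟨p, hp, hps⟩ := Finset.exists_mem_eq_sup' hne f
  have hbQ : ∀ s', BddAbove (Set.range (Q s')) := fun s' =>
    Set.Finite.bddAbove (Set.finite_range _)
  have hbQ' : ∀ s', BddAbove (Set.range (Q' s')) := fun s' =>
    Set.Finite.bddAbove (Set.finite_range _)
  have hsup : ∀ s', |(⨆ a' : A, Q' s' a') - ((⨆ a' : A, Q s' a') + v s')| ≤ M := by
    intro s'
    rw [abs_le]
    constructor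
    · have h1 : (⨆ a' : A, Q s' a') ≤ (⨆ a' : A, Q' s' a') - v s' + M := by
        apply ciSup_le
        intro a'
        have := hle s' a'
        have h2 : Q' s' a' ≤ ⨆ a'' : A, Q' s' a'' := le_ciSup (hbQ' s') a'
        rw [abs_le] at this
        simp only [hDdef] at this
        linarith [this.1]
      linarith
    · have h1 : (⨆ a' : A, Q' s' a') ≤ ((⨆ a' : A, Q s' a') + v s') + M := by
        apply ciSup_le
        intro a'
        have := hle s' a'
        have h2 : Q s' a' ≤ ⨆ a'' : A, Q s' a'' := le_ciSup (hbQ s') a'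
        rw [abs_le] at this
        simp only [hDdef] at this
        linarith [this.2]
      linarith
  have key : ∀ s a, |D s a| ≤ γ * M := by
    intro s a
    have hv : v s = ∑ s', P s a s' * v s := by
      rw [← Finset.sum_mul, hProw, one_mul]
    have hDeq : D s a = γ * ∑ s', P s a s' *
        ((⨆ a' : A, Q' s' a') - ((⨆ a' : A, Q s' a') + v s')) := by
      simp only [hDdef]
      rw [hQ s a, hQ' s a, Finset.mul_sum]
      have hterm : ∀ x ∈ Finset.univ,
          P s a x * (R s a x + v s - γ * v x + γ * ⨆ a' : A, Q' x a') =
          P s a x * (R s a x + γ * ⨆ a' : A, Q x a') +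
            γ * (P s a x * ((⨆ a' : A, Q' x a') - ((⨆ a' : A, Q x a') + v x))) +
            P s a x * v s := by
        intro x _
        ring
      rw [Finset.sum_congr rfl hterm, Finset.sum_add_distrib, Finset.sum_add_distrib,
        ← hv]
      ring
    rw [hDeq, abs_mul, abs_of_nonneg hγ0]
    apply mul_le_mul_of_nonneg_left _ hγ0
    calc |∑ s', P s a s' * ((⨆ a' : A, Q' s' a') - ((⨆ a' : A, Q s' a') + v s'))|
        ≤ ∑ s', |P s a s' * ((⨆ a' : A, Q' s' a') - ((⨆ a' : A, Q s' a') + v s'))| :=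
          Finset.abs_sum_le_sum_abs _ _
      _ ≤ ∑ s', P s a s' * M := by
          apply Finset.sum_le_sum
          intro x _
          rw [abs_mul, abs_of_nonneg (hPnn s a x)]
          exact mul_le_mul_of_nonneg_left (hsup x) (hPnn s a x)
      _ = M := by rw [← Finset.sum_mul, hProw, one_mul]
  have hM0 : 0 ≤ M := le_trans (abs_nonneg _) (hle p.1 p.2)
  have hMle : M ≤ γ * M := (hMdef.trans hps).le.trans (key p.1 p.2)
  have hMz : M = 0 := by nlinarith
  have hDz : ∀ s a, D s a = 0 := by
    intro s a
    have := hle s a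
    rw [hMz] at this
    exact abs_eq_zero.mp (le_antisymm this (abs_nonneg _))
  have hQQ : ∀ s a, Q' s a = Q s a + v s := by
    intro s a
    have := hDz s a
    simp only [hDdef] at this
    linarith
  refine ⟨hQQ, fun s a => ?_⟩
  constructor
  · intro h a'
    have := h a'
    rw [hQQ s a', hQQ s a] at this
    linarith
  · intro h a'
    rw [hQQ s a', hQQ s a]
    linarith [h a']
end
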